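/- arXiv:1604.02969 — 3 statements merged into one kernel-verified Lean document; each statement's English description precedes it below -/
import Mathlib

section
/- Let k ∈ ℕ and let α₁, …, α_k be compositions. Then the product of monomial quasisymmetric functions satisfies M_{α₁} M_{α₂} ⋯ M_{α_k} = Σ_A M_{column A}, where the sum ranges over all column-reduced matrices A with k rows and finitely many columns of nonnegative integers such that for each g ∈ {1,…,k}, the g-th row of A with zeros removed equals α_g; here column A is the composition of column sums of A. -/
/-- A composition: a finite list of positive integers. -/
def IsComposition (α : List ℕ) : Prop := ∀ a ∈ α, 0 < a

/-- `w^red`: the list obtained from a list of nonnegative integers by removing all zero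
entries. -/
def redList (l : List ℕ) : List ℕ := l.filter (· ≠ 0)

/-- The exponent multiset of the monomial `x_{i 0}^{α₀} x_{i 1}^{α₁} ⋯` attached to a list `α`
and an assignment `i` of variable indices. -/
noncomputable def expOf (α : List ℕ) (i : Fin α.length → ℕ) : ℕ →₀ ℕ :=
  ∑ j : Fin α.length, Finsupp.single (i j) (α.get j)

open Classical in
/-- The monomial quasisymmetric function
`M_α = ∑_{i₁ < i₂ < ⋯ < i_ℓ} x_{i₁}^{α₁} x_{i₂}^{α₂} ⋯ x_{i_ℓ}^{α_ℓ}`, as a formal power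
series in the variables `x₀, x₁, x₂, …`. -/
noncomputable def Mps (k : Type*) [CommRing k] (α : List ℕ) : MvPowerSeries ℕ k :=
  fun d => if ∃ i : Fin α.length → ℕ, StrictMono i ∧ expOf α i = d then 1 else 0

/-- The list of column sums of a matrix `A ∈ ℕ^{m × v}`. -/
def colSums {m v : ℕ} (A : Matrix (Fin m) (Fin v) ℕ) : List ℕ :=
  List.ofFn fun j => ∑ i, A i j

/-- A matrix is column-reduced if no column of it is the zero vector. -/
def ColReduced {m v : ℕ} (A : Matrix (Fin m) (Fin v) ℕ) : Prop :=
  ∀ j, ∃ i, A i j ≠ 0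

/-! ## Auxiliary lemmas -/

/-- The list of values of `d` along its sorted support. -/
noncomputable def sortedVals (d : ℕ →₀ ℕ) : List ℕ := (d.support.sort (· ≤ ·)).map d

lemma expOf_apply (α : List ℕ) (i : Fin α.length → ℕ) (x : ℕ) :
    expOf α i x = ∑ j : Fin α.length, if i j = x then α.get j else 0 := by
  rw [expOf, Finsupp.finset_sum_apply]
  simp [Finsupp.single_apply]

lemma expOf_apply_self (α : List ℕ) {i : Fin α.length → ℕ} (hi : Function.Injective i)
    (j : Fin α.length) : expOf α i (i j) = α.get j := by
  rw [expOf_apply, Finset.sum_eq_single j]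
  · simp
  · intro b _ hb
    simp only [ite_eq_right_iff]
    intro h; exact absurd (hi h) hb
  · simp

lemma expOf_apply_of_not_mem (α : List ℕ) (i : Fin α.length → ℕ) {x : ℕ}
    (hx : ∀ j, i j ≠ x) : expOf α i x = 0 := by
  rw [expOf_apply]
  exact Finset.sum_eq_zero fun j _ => by simp [hx j]

lemma expOf_support (α : List ℕ) (hα : IsComposition α) {i : Fin α.length → ℕ}
    (hi : Function.Injective i) :
    (expOf α i).support = Finset.image i Finset.univ := by
  ext x
  simp only [Finsupp.mem_support_iff, Finset.mem_image, Finset.mem_univ, true_and]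
  constructor
  · intro hx
    by_contra h
    push_neg at h
    exact hx (expOf_apply_of_not_mem α i h)
  · rintro ⟨j, rfl⟩
    rw [expOf_apply_self α hi j]
    exact (hα _ (α.get_mem ..)).ne'

lemma sort_image_strictMono {n : ℕ} {i : Fin n → ℕ} (hi : StrictMono i) :
    (Finset.image i Finset.univ).sort (· ≤ ·) = List.ofFn i := by
  refine (fun h1 h2 h3 => List.Perm.eq_of_pairwise' (r := (· ≤ ·)) h2 h3 h1) ?_ ?_ ?_
  · apply List.perm_of_nodup_nodup_toFinset_eq (Finset.sort_nodup _ _)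
    · exact (List.nodup_ofFn).2 hi.injective
    · rw [Finset.sort_toFinset]
      ext x
      simp [List.mem_ofFn]
  · exact Finset.pairwise_sort _ _
  · exact List.pairwise_ofFn.2 fun a b hab => (hi hab).le

lemma exists_strictMono_iff (α : List ℕ) (hα : IsComposition α) (d : ℕ →₀ ℕ) :
    (∃ i : Fin α.length → ℕ, StrictMono i ∧ expOf α i = d) ↔ sortedVals d = α := by
  constructor
  · rintro ⟨i, hmono, rfl⟩
    rw [sortedVals, expOf_support α hα hmono.injective, sort_image_strictMono hmono,
      List.map_ofFn]
    have : (expOf α i) ∘ i = α.get := by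
      funext j; exact expOf_apply_self α hmono.injective j
    rw [this, List.ofFn_get]
  · intro h
    set s := d.support.sort (· ≤ ·) with hs
    simp only [sortedVals] at h
    have hlen : α.length = s.length := by rw [← h, List.length_map]
    have hmem : ∀ x, x ∈ s ↔ x ∈ d.support := fun x => Finset.mem_sort _
    have hmono : StrictMono (fun j : Fin α.length => s.get (Fin.cast hlen j)) := by
      intro a b hab
      exact (d.support.sortedLT_sort).strictMono_get hab
    refine ⟨_, hmono, ?_⟩
    ext x
    by_cases hx : x ∈ d.support
    · obtain ⟨j', hj'⟩ := List.get_of_mem ((hmem x).2 hx)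
      have h1 : (fun j : Fin α.length => s.get (Fin.cast hlen j)) (Fin.cast hlen.symm j')
          = s.get j' := rfl
      rw [← hj', ← h1, expOf_apply_self α hmono.injective]
      rw [h1, List.get_eq_getElem, List.get_eq_getElem, List.getElem_of_eq h.symm,
        List.getElem_map]
      rfl
    · rw [Finsupp.notMem_support_iff.1 hx, expOf_apply_of_not_mem]
      intro j hj
      exact hx ((hmem x).1 (hj ▸ List.get_mem s _))

open Classical in
lemma Mps_coeff (k : Type*) [CommRing k] (α : List ℕ) (hα : IsComposition α) (d : ℕ →₀ ℕ) :
    Mps k α d = if sortedVals d = α then 1 else 0 := by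
  simp only [Mps, exists_strictMono_iff α hα d]

lemma sortedVals_of_support_subset {e d : ℕ →₀ ℕ} (h : e.support ⊆ d.support) :
    sortedVals e = redList ((d.support.sort (· ≤ ·)).map e) := by
  rw [sortedVals, redList, List.filter_map]
  congr 1
  refine (fun h1 h2 h3 => List.Perm.eq_of_pairwise' (r := (· ≤ ·)) h2 h3 h1) ?_ ?_ ?_
  · apply List.perm_of_nodup_nodup_toFinset_eq (Finset.sort_nodup _ _)
    · exact ((d.support.sort_nodup _)).filter _
    · ext x
      simp only [Finset.sort_toFinset, List.toFinset_filter, Finset.mem_filter,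
        Finset.sort_toFinset, Finsupp.mem_support_iff, Function.comp_apply, ne_eq,
        decide_not, Bool.not_eq_true', decide_eq_false_iff_not, List.mem_toFinset,
        List.mem_filter, Finset.mem_sort]
      constructor
      · intro hx
        exact ⟨Finsupp.mem_support_iff.1 (h (Finsupp.mem_support_iff.2 hx)), by simpa using hx⟩
      · rintro ⟨-, hx⟩
        simpa using hx
  · exact Finset.pairwise_sort _ _
  · exact (Finset.pairwise_sort _ _).filter _

lemma length_filter_eq_sum_map (l : List ℕ) (p : ℕ → Bool) :
    (l.filter p).length = (l.map fun x => if p x then 1 else 0).sum := by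
  induction l with
  | nil => simp
  | cons a t ih => by_cases h : p a <;> simp [List.filter_cons, h, ih, Nat.add_comm]

lemma setS_finite (m : ℕ) (α : Fin m → List ℕ) :
    {p : Σ v : ℕ, Matrix (Fin m) (Fin v) ℕ |
      ColReduced p.2 ∧ ∀ g, redList (List.ofFn (p.2 g)) = α g}.Finite := by
  classical
  set N : ℕ := ∑ g, (α g).length with hN
  have hfin : ∀ v : ℕ,
      ({A : Matrix (Fin m) (Fin v) ℕ | ∀ g j, A g j ≤ (α g).sum}).Finite := by
    intro v
    have he : {A : Matrix (Fin m) (Fin v) ℕ | ∀ g j, A g j ≤ (α g).sum} =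
        Set.pi Set.univ (fun g : Fin m => Set.pi Set.univ fun _ : Fin v =>
          Set.Iic ((α g).sum)) := by
      ext A
      simp only [Set.mem_setOf_eq]
      constructor
      · intro h g _ j _
        exact h g j
      · intro h g j
        exact h g (Set.mem_univ g) j (Set.mem_univ j)
    rw [he]
    exact Set.Finite.pi fun g => Set.Finite.pi fun _ => Set.finite_Iic _
  apply Set.Finite.subset
    ((Set.finite_Iic N).biUnion fun v _ => (hfin v).image (Sigma.mk v))
  rintro ⟨v, A⟩ ⟨hcr, hrow⟩
  -- every entry lies in its row's redList or is zero
  have hentry : ∀ g j, A g j ≤ (α g).sum := by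
    intro g j
    rcases Nat.eq_zero_or_pos (A g j) with h0 | h0
    · simp [h0]
    · have hmem : A g j ∈ redList (List.ofFn (A g)) := by
        rw [redList, List.mem_filter]
        exact ⟨by simp only [List.mem_ofFn]; exact ⟨j, rfl⟩, by simpa using h0.ne'⟩
      rw [hrow g] at hmem
      exact List.single_le_sum (fun x _ => Nat.zero_le x) _ hmem
  -- bound the number of columns
  have hrowcount : ∀ g, (∑ j : Fin v, if A g j ≠ 0 then 1 else 0) = (α g).length := by
    intro g
    rw [← hrow g, redList, length_filter_eq_sum_map, List.map_ofFn, List.sum_ofFn]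
    simp
  have hv : v ≤ N := by
    calc v = ∑ _j : Fin v, 1 := by simp
    _ ≤ ∑ j : Fin v, ∑ g : Fin m, if A g j ≠ 0 then 1 else 0 := by
        apply Finset.sum_le_sum
        intro j _
        obtain ⟨g, hg⟩ := hcr j
        calc (1 : ℕ) = if A g j ≠ 0 then 1 else 0 := by simp [hg]
        _ ≤ ∑ g : Fin m, if A g j ≠ 0 then 1 else 0 :=
            Finset.single_le_sum (f := fun g => if A g j ≠ 0 then 1 else 0)
              (fun _ _ => Nat.zero_le _) (Finset.mem_univ g)
    _ = ∑ g : Fin m, ∑ j : Fin v, if A g j ≠ 0 then 1 else 0 := Finset.sum_comm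
    _ = N := by rw [hN]; exact Finset.sum_congr rfl fun g _ => hrowcount g
  exact Set.mem_biUnion hv ⟨A, hentry, rfl⟩

lemma sum_single_apply {n : ℕ} (t c : Fin n → ℕ) (x : ℕ) :
    (∑ j, Finsupp.single (t j) (c j)) x = ∑ j, if t j = x then c j else 0 := by
  rw [Finsupp.finset_sum_apply]
  simp [Finsupp.single_apply]

lemma sum_single_apply_self {n : ℕ} {t : Fin n → ℕ} (ht : Function.Injective t)
    (c : Fin n → ℕ) (j0 : Fin n) :
    (∑ j, Finsupp.single (t j) (c j)) (t j0) = c j0 := by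
  rw [sum_single_apply, Finset.sum_eq_single j0]
  · simp
  · intro b _ hb
    simp only [ite_eq_right_iff]
    intro h; exact absurd (ht h) hb
  · simp

lemma sum_single_apply_of_ne {n : ℕ} (t c : Fin n → ℕ) {x : ℕ} (hx : ∀ j, t j ≠ x) :
    (∑ j, Finsupp.single (t j) (c j)) x = 0 := by
  rw [sum_single_apply]
  exact Finset.sum_eq_zero fun j _ => by simp [hx j]


/-- Product formula for monomial quasisymmetric functions: for compositions `α₁, …, α_m`,
`M_{α₁} M_{α₂} ⋯ M_{α_m} = ∑_A M_{column A}`, the sum ranging over all column-reduced matrices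
`A` of nonnegative integers with `m` rows (and finitely many columns) whose `g`-th row, with
zeros removed, equals `α_g` for each `g`. -/
theorem Mps_list_prod (k : Type*) [CommRing k] (m : ℕ) (α : Fin m → List ℕ)
    (hα : ∀ g, IsComposition (α g)) :
    (∏ g, Mps k (α g)) =
      ∑ᶠ p ∈ {p : Σ v : ℕ, Matrix (Fin m) (Fin v) ℕ |
          ColReduced p.2 ∧ ∀ g, redList (List.ofFn (p.2 g)) = α g},
        Mps k (colSums p.2) := by
  classical
  have hS := setS_finite m α
  rw [← hS.coe_toFinset, finsum_mem_coe_finset]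
  apply MvPowerSeries.ext
  intro d
  set s : List ℕ := d.support.sort (· ≤ ·) with hs
  have hsnd : s.Nodup := d.support.sort_nodup _
  have hsinj : Function.Injective s.get := List.nodup_iff_injective_get.1 hsnd
  have hsmem : ∀ x, x ∈ s ↔ x ∈ d.support := fun x => Finset.mem_sort _
  -- LHS
  rw [MvPowerSeries.coeff_prod]
  have hL : ∀ l ∈ Finset.finsuppAntidiag (Finset.univ : Finset (Fin m)) d,
      (∏ g, MvPowerSeries.coeff (l g) (Mps k (α g)))
        = if ∀ g, sortedVals (l g) = α g then (1 : k) else 0 := by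
    intro l _
    have : ∀ g : Fin m, MvPowerSeries.coeff (l g) (Mps k (α g))
        = if sortedVals (l g) = α g then (1 : k) else 0 := fun g => by
      rw [MvPowerSeries.coeff_apply, Mps_coeff k (α g) (hα g)]
    rw [Finset.prod_congr rfl fun g _ => this g, Finset.prod_boole]
    simp
  rw [Finset.sum_congr rfl hL, Finset.sum_boole]
  -- RHS
  rw [map_sum]
  have hR : ∀ p ∈ hS.toFinset,
      MvPowerSeries.coeff d (Mps k (colSums p.2))
        = if sortedVals d = colSums p.2 then (1 : k) else 0 := by
    intro p hp
    rw [Set.Finite.mem_toFinset] at hp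
    obtain ⟨hcr, -⟩ := hp
    have hcomp : IsComposition (colSums p.2) := by
      intro a ha
      rw [colSums, List.mem_ofFn] at ha
      obtain ⟨j, rfl⟩ := ha
      obtain ⟨i, hi⟩ := hcr j
      exact Finset.sum_pos' (fun _ _ => Nat.zero_le _)
        ⟨i, Finset.mem_univ i, Nat.pos_of_ne_zero hi⟩
    rw [MvPowerSeries.coeff_apply, Mps_coeff k _ hcomp]
  rw [Finset.sum_congr rfl hR, Finset.sum_boole]
  congr 1
  -- the bijection
  apply Finset.card_nbij
    (fun l => (⟨s.length, fun g j => l g (s.get j)⟩ : Σ v : ℕ, Matrix (Fin m) (Fin v) ℕ))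
  · -- maps to
    intro l hl
    rw [Finset.mem_coe, Finset.mem_filter, Finset.mem_finsuppAntidiag] at hl
    obtain ⟨⟨hsum, -⟩, hrows⟩ := hl
    have hd : ∀ x, d x = ∑ g, l g x := fun x => by
      rw [← hsum, Finsupp.finset_sum_apply]
    have hsub : ∀ g, (l g).support ⊆ d.support := by
      intro g x hx
      rw [Finsupp.mem_support_iff] at hx ⊢
      intro h0
      rw [hd x] at h0
      exact hx (Nat.eq_zero_of_le_zero (h0 ▸ Finset.single_le_sum
        (f := fun g => l g x) (fun _ _ => Nat.zero_le _) (Finset.mem_univ g)))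
    rw [Finset.mem_coe, Finset.mem_filter, Set.Finite.mem_toFinset]
    refine ⟨⟨?_, ?_⟩, ?_⟩
    · -- column reduced
      intro j
      by_contra h
      push_neg at h
      have : d (s.get j) ≠ 0 :=
        Finsupp.mem_support_iff.1 ((hsmem _).1 (List.get_mem s _))
      exact this (by rw [hd]; exact Finset.sum_eq_zero fun g _ => h g)
    · -- rows
      intro g
      have h1 : List.ofFn (fun j => l g (s.get j)) = s.map (l g) := by
        conv_rhs => rw [← List.ofFn_get s]
        rw [List.map_ofFn]
        rfl
      rw [h1, ← sortedVals_of_support_subset (hsub g)]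
      exact hrows g
    · -- column sums
      rw [sortedVals, colSums]
      have : List.map (⇑d) s = List.ofFn fun j => d (s.get j) := by
        conv_lhs => rw [← List.ofFn_get s]
        rw [List.map_ofFn]
        rfl
      rw [this]
      congr 1
      funext j
      rw [hd]
  · -- injective
    intro l1 h1 l2 h2 heq
    simp only [Finset.coe_filter, Set.mem_setOf_eq, Finset.mem_finsuppAntidiag] at h1 h2
    obtain ⟨⟨hsum1, -⟩, -⟩ := h1
    obtain ⟨⟨hsum2, -⟩, -⟩ := h2
    have hmat : (fun g j => l1 g (s.get j)) = (fun g j => l2 g (s.get j)) := by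
      have := (Sigma.mk.inj_iff.1 heq).2
      exact eq_of_heq this
    have hsub : ∀ (l : Fin m →₀ (ℕ →₀ ℕ)), Finset.univ.sum ⇑l = d →
        ∀ g x, x ∉ d.support → l g x = 0 := by
      intro l hsum g x hx
      by_contra h0
      have hle : l g x ≤ d x := by
        rw [← hsum, Finsupp.finset_sum_apply]
        exact Finset.single_le_sum (f := fun g => l g x)
          (fun _ _ => Nat.zero_le _) (Finset.mem_univ g)
      rw [Finsupp.notMem_support_iff.1 hx, Nat.le_zero] at hle
      exact h0 hle
    ext g x
    by_cases hx : x ∈ d.support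
    · obtain ⟨j, hj⟩ := List.get_of_mem ((hsmem x).2 hx)
      rw [← hj]
      exact congrFun (congrFun hmat g) j
    · rw [hsub l1 hsum1 g x hx, hsub l2 hsum2 g x hx]
  · -- surjective
    rintro ⟨v, A⟩ hb
    simp only [Finset.coe_filter, Set.mem_setOf_eq, Set.Finite.mem_toFinset] at hb
    obtain ⟨⟨hcr, hrows⟩, hcols⟩ := hb
    simp only [sortedVals, colSums] at hcols
    have hv : v = s.length := by
      have := congrArg List.length hcols
      simp only [List.length_map, List.length_ofFn] at this
      exact this.symm
    subst hv
    set l : Fin m →₀ (ℕ →₀ ℕ) :=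
      Finsupp.equivFunOnFinite.symm
        (fun g => ∑ j, Finsupp.single (s.get j) (A g j)) with hldef
    have hlapp : ∀ g, l g = ∑ j, Finsupp.single (s.get j) (A g j) := fun g => rfl
    have hAval' : True := trivial
    have hcolsum : ∀ j : Fin s.length, d (s.get j) = ∑ g, A g j := by
      intro j
      have h2 := List.getElem_of_eq hcols (i := (j : ℕ)) (by rw [List.length_map]; exact j.isLt)
      simp only [List.getElem_map, List.getElem_ofFn] at h2
      simpa [List.get_eq_getElem] using h2
    have hAval : ∀ g j, l g (s.get j) = A g j := by
      intro g j
      rw [hlapp g]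
      exact sum_single_apply_self hsinj (A g) j
    have hsum : Finset.univ.sum ⇑l = d := by
      ext x
      rw [Finsupp.finset_sum_apply]
      have : ∀ g : Fin m, l g x = ∑ j, if s.get j = x then A g j else 0 := fun g => by
        rw [hlapp g, sum_single_apply]
      rw [Finset.sum_congr rfl fun g _ => this g, Finset.sum_comm]
      by_cases hx : x ∈ d.support
      · obtain ⟨j0, hj0⟩ := List.get_of_mem ((hsmem x).2 hx)
        rw [Finset.sum_eq_single j0]
        · rw [hj0, ← hj0, hcolsum j0]
          simp
        · intro j _ hj
          apply Finset.sum_eq_zero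
          intro g _
          rw [if_neg]
          intro h
          exact hj (hsinj (h.trans hj0.symm))
        · simp
      · rw [Finsupp.notMem_support_iff.1 hx]
        apply Finset.sum_eq_zero
        intro j _
        apply Finset.sum_eq_zero
        intro g _
        rw [if_neg]
        intro h
        exact hx ((hsmem x).1 (h ▸ List.get_mem s _))
    refine ⟨l, ?_, ?_⟩
    · rw [Finset.mem_coe, Finset.mem_filter, Finset.mem_finsuppAntidiag]
      refine ⟨⟨hsum, Finset.subset_univ _⟩, ?_⟩
      intro g
      have hsub : (l g).support ⊆ d.support := by
        intro x hx
        rw [Finsupp.mem_support_iff, hlapp g] at hx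
        by_contra h
        exact hx (sum_single_apply_of_ne _ _ fun j hj =>
          h ((hsmem x).1 (hj ▸ List.get_mem s _)))
      rw [sortedVals_of_support_subset hsub]
      have : s.map (l g) = List.ofFn (A g) := by
        apply List.ext_getElem
        · simp
        · intro n h1 h2
          simp only [List.getElem_map, List.getElem_ofFn]
          exact hAval g ⟨n, by simpa using h1⟩
      rw [this]
      exact hrows g
    · show (⟨s.length, fun g j => l g (s.get j)⟩ : Σ v : ℕ, Matrix (Fin m) (Fin v) ℕ)
        = ⟨s.length, A⟩
      congr 1
      funext g j
      exact hAval g j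
end

section
/- Let H be a connected graded k-Hopf algebra over a commutative ring k, ζ : H → k a k-algebra homomorphism, and Ψ : H → QSym the unique graded k-coalgebra homomorphism with ε_P ∘ Ψ = ζ (Aguiar–Bergeron–Sottile). Then for every n ∈ ℕ and h ∈ H_n, Ψ(h) = Σ_{α composition, |α| = n} ζ_α(h) · M_α, where for α = (a₁,…,a_k), ζ_α is the composite H → H^{⊗k} → H^{⊗k} → k^{⊗k} ≅ k of Δ^{(k−1)}, the projection π_α = π_{a₁} ⊗ ⋯ ⊗ π_{a_k} onto graded components, and ζ^{⊗k}. -/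
open TensorProduct

section

variable {k H : Type*} [CommRing k] [Ring H] [HopfAlgebra k H]

/-- For a `k`-algebra homomorphism `ζ : H → k` and graded projections `π n : H → H`, and a
composition `α = (a₁, …, a_m)`, the map `ζ_α : H → k` : the composite of the iterated
comultiplication `Δ^{(m-1)} : H → H^{⊗m}`, the projection `π_α = π_{a₁} ⊗ ⋯ ⊗ π_{a_m}`,
`ζ^{⊗m}`, and the canonical isomorphism `k^{⊗m} ≅ k` (written in its standard recursive
form). -/
noncomputable def zetaA (ζ : H →ₐ[k] k) (π : ℕ → H →ₗ[k] H) : List ℕ → (H →ₗ[k] k)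
  | [] => Coalgebra.counit (R := k)
  | a :: t => LinearMap.mul' k k ∘ₗ
      TensorProduct.map (ζ.toLinearMap ∘ₗ π a) (zetaA ζ π t) ∘ₗ Coalgebra.comul (R := k)

/-- Convolution product on `Hom_k(H, k)`: `f ⋆ g = m_k ∘ (f ⊗ g) ∘ Δ_H`. -/
noncomputable def convK (f g : H →ₗ[k] k) : H →ₗ[k] k :=
  LinearMap.mul' k k ∘ₗ TensorProduct.map f g ∘ₗ Coalgebra.comul (R := k)

/-- For graded projections `π n : H → H` and a composition `α = (a₁, …, a_m)`, the map
`ξ_α = m^{(m-1)} ∘ π_α ∘ Δ^{(m-1)} : H → H` (written in its standard recursive form). -/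
noncomputable def xiA (π : ℕ → H →ₗ[k] H) : List ℕ → (H →ₗ[k] H)
  | [] => Algebra.linearMap k H ∘ₗ Coalgebra.counit (R := k)
  | a :: t => LinearMap.mul' k H ∘ₗ
      TensorProduct.map (π a) (xiA π t) ∘ₗ Coalgebra.comul (R := k)

/-- Convolution product on `End_k(H)`: `f ⋆ g = m_H ∘ (f ⊗ g) ∘ Δ_H`. -/
noncomputable def convH (f g : H →ₗ[k] H) : H →ₗ[k] H :=
  LinearMap.mul' k H ∘ₗ TensorProduct.map f g ∘ₗ Coalgebra.comul (R := k)

end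

open TensorProduct

/-- The underlying `k`-module of the quasisymmetric functions: the free `k`-module with basis
indexed by finite lists of natural numbers (the monomial quasisymmetric functions `M_α` for
compositions `α`, i.e. lists with positive entries, form the monomial basis). -/
abbrev QSymM (k : Type*) [CommRing k] : Type _ := List ℕ →₀ k


/-- The monomial quasisymmetric function `M_α`, as a basis vector. -/
noncomputable def Mq (k : Type*) [CommRing k] (α : List ℕ) : QSymM k := Finsupp.single α 1

/-- The comultiplication of `QSym` (deconcatenation coproduct):
`Δ (M_β) = ∑ i, M_{(b₁,…,b_i)} ⊗ M_{(b_{i+1},…,b_ℓ)}`. -/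
noncomputable def comulQ (k : Type*) [CommRing k] : QSymM k →ₗ[k] QSymM k ⊗[k] QSymM k :=
  Finsupp.lsum k fun β => LinearMap.toSpanSingleton k _
    (∑ i ∈ Finset.range (β.length + 1), Mq k (β.take i) ⊗ₜ[k] Mq k (β.drop i))

/-- The counit of `QSym`: `ε (M_α) = 1` if `α = ()` and `0` otherwise. -/
noncomputable def counitQ (k : Type*) [CommRing k] : QSymM k →ₗ[k] k :=
  Finsupp.lsum k fun β => if β = [] then LinearMap.id else 0

/-- The algebra homomorphism `ε_P : QSym → k`, `f ↦ f (1, 0, 0, …)`: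
it sends `M_α ↦ 1` if `α` has length `≤ 1`, and `M_α ↦ 0` otherwise. -/
noncomputable def epsP (k : Type*) [CommRing k] : QSymM k →ₗ[k] k :=
  Finsupp.lsum k fun β => if β.length ≤ 1 then LinearMap.id else 0

/-- The projection of `QSym` onto its homogeneous component of degree `n`. -/
noncomputable def piQ (k : Type*) [CommRing k] (n : ℕ) : QSymM k →ₗ[k] QSymM k :=
  Finsupp.lsum k fun β => if β.sum = n then LinearMap.toSpanSingleton k _ (Mq k β) else 0

section ABSaux

variable {k : Type*} [CommRing k]

lemma ABSaux_if_mem (f : QSymM k) (c : List ℕ) :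
    (if c ∈ f.support then f c else 0) = f c := by
  split
  · rfl
  · exact (Finsupp.notMem_support_iff.mp ‹_›).symm

lemma ABSaux_counitQ_apply (f : QSymM k) : counitQ k f = f [] := by
  rw [counitQ, Finsupp.lsum_apply, Finsupp.sum]
  have h : ∀ β ∈ f.support,
      (if β = ([] : List ℕ) then (LinearMap.id : k →ₗ[k] k) else 0) (f β)
        = if β = [] then f β else 0 := by
    intro β _; split <;> simp
  rw [Finset.sum_congr rfl h, Finset.sum_ite_eq' f.support ([] : List ℕ) (fun β => f β),
    ABSaux_if_mem]

lemma ABSaux_epsP_supported {m : ℕ} (f : QSymM k) (hf : ∀ β : List ℕ, β.sum ≠ m → f β = 0) :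
    epsP k f = f [] + f [m] := by
  rw [epsP, Finsupp.lsum_apply, Finsupp.sum]
  have h : ∀ β ∈ f.support,
      (if β.length ≤ 1 then (LinearMap.id : k →ₗ[k] k) else 0) (f β)
        = (if β = [] then f β else 0) + (if β = [m] then f β else 0) := by
    intro β hβ
    have hsum : β.sum = m := by
      by_contra hc; exact Finsupp.mem_support_iff.mp hβ (hf β hc)
    rcases β with _ | ⟨b, _ | ⟨c, t⟩⟩
    · simp
    · simp only [List.sum_cons, List.sum_nil, add_zero] at hsum
      subst hsum
      simp
    · simp [List.length]
  rw [Finset.sum_congr rfl h, Finset.sum_add_distrib,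
    Finset.sum_ite_eq' f.support ([] : List ℕ) (fun β => f β),
    Finset.sum_ite_eq' f.support ([m] : List ℕ) (fun β => f β),
    ABSaux_if_mem, ABSaux_if_mem]

lemma ABSaux_lapply_cons (a : ℕ) (t : List ℕ) :
    (Finsupp.lapply (a :: t) : QSymM k →ₗ[k] k) =
      LinearMap.mul' k k ∘ₗ
        TensorProduct.map (Finsupp.lapply [a]) (Finsupp.lapply t) ∘ₗ comulQ k := by
  apply Finsupp.lhom_ext
  intro γ c
  rw [Finsupp.lapply_apply, Finsupp.single_apply, LinearMap.comp_apply, LinearMap.comp_apply,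
    comulQ, Finsupp.lsum_single, LinearMap.toSpanSingleton_apply]
  rw [map_smul, map_smul, map_sum, map_sum]
  have hterm : ∀ i : ℕ,
      (LinearMap.mul' k k) (TensorProduct.map (Finsupp.lapply [a]) (Finsupp.lapply t)
        ((Mq k (γ.take i)) ⊗ₜ[k] (Mq k (γ.drop i))))
      = (if γ.take i = [a] then (1:k) else 0) * (if γ.drop i = t then (1:k) else 0) := by
    intro i
    rw [TensorProduct.map_tmul, LinearMap.mul'_apply, Finsupp.lapply_apply,
      Finsupp.lapply_apply, Mq, Mq, Finsupp.single_apply, Finsupp.single_apply]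
  rw [Finset.sum_congr rfl (fun i _ => hterm i)]
  have hsum : (∑ i ∈ Finset.range (γ.length + 1),
      (if γ.take i = [a] then (1:k) else 0) * (if γ.drop i = t then (1:k) else 0))
      = if γ = a :: t then 1 else 0 := by
    by_cases hγ : γ = a :: t
    · subst hγ
      rw [if_pos rfl, Finset.sum_eq_single 1]
      · simp
      · intro i hi hne
        have hi' : i ≤ (a :: t).length := Nat.lt_succ_iff.mp (Finset.mem_range.mp hi)
        have hne' : ¬ (a :: t).take i = [a] := by
          intro hc
          apply hne
          have hlen := congrArg List.length hc
          rw [List.length_take, min_eq_left hi'] at hlen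
          simpa using hlen
        simp [hne']
      · intro h1
        exact absurd (Finset.mem_range.mpr (by simp)) h1
    · rw [if_neg hγ, Finset.sum_eq_zero]
      intro i _
      by_cases h1 : γ.take i = [a]
      · by_cases h2 : γ.drop i = t
        · exact absurd (by rw [← List.take_append_drop i γ, h1, h2]; rfl) hγ
        · simp [h2]
      · simp [h1]
  rw [hsum, smul_eq_mul]
  split <;> ring

end ABSaux

/-- Aguiar–Bergeron–Sottile formula: let `H` be a connected graded `k`-Hopf algebra (grading
`ℋ`, graded projections `π`), `ζ : H → k` a `k`-algebra homomorphism, and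
`Ψ : H → QSym` the unique graded `k`-coalgebra homomorphism with `ε_P ∘ Ψ = ζ`.  Then for every
`n ∈ ℕ` and every `h ∈ H_n`,
`Ψ(h) = ∑_{α composition, |α| = n} ζ_α(h) · M_α`,
where `ζ_α` is the composite of `Δ^{(m-1)}`, `π_α`, `ζ^{⊗m}` and `k^{⊗m} ≅ k` for
`α = (a₁, …, a_m)`. -/

theorem ABS_psi_formula {k H : Type*} [CommRing k] [Ring H] [HopfAlgebra k H]
    (ℋ : ℕ → Submodule k H) (π : ℕ → H →ₗ[k] H)
    (hdec : DirectSum.IsInternal ℋ)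
    (hconn : ℋ 0 = LinearMap.range (Algebra.linearMap k H))
    (hπ : ∀ n m : ℕ, ∀ h ∈ ℋ m, π n h = if n = m then h else 0)
    (hgmul : ∀ i j : ℕ, ℋ i * ℋ j ≤ ℋ (i + j))
    (hgcomul : ∀ n : ℕ, ∀ h ∈ ℋ n, Coalgebra.comul (R := k) h ∈
      ⨆ (p : ℕ × ℕ) (_ : p.1 + p.2 = n),
        LinearMap.range (TensorProduct.mapIncl (ℋ p.1) (ℋ p.2)))
    (ζ : H →ₐ[k] k) (Ψ : H →ₗ[k] QSymM k)
    (hΨgraded : ∀ n : ℕ, ∀ h ∈ ℋ n,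
      Ψ h ∈ Finsupp.supported k k {α : List ℕ | α.sum = n})
    (hΨcomul : comulQ k ∘ₗ Ψ = TensorProduct.map Ψ Ψ ∘ₗ Coalgebra.comul (R := k))
    (hΨcounit : counitQ k ∘ₗ Ψ = Coalgebra.counit (R := k))
    (hΨzeta : epsP k ∘ₗ Ψ = ζ.toLinearMap) :
    ∀ n : ℕ, ∀ h ∈ ℋ n,
      Ψ h = ∑ᶠ α ∈ {α : List ℕ | IsComposition α ∧ α.sum = n},
        zetaA ζ π α h • Mq k α := by
  classical
  -- A linear functional on `H` is determined by its values on the graded pieces.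
  have hext : ∀ (f g : H →ₗ[k] k), (∀ m : ℕ, ∀ x ∈ ℋ m, f x = g x) → f = g := by
    intro f g hfg
    ext x
    have hx : x ∈ ⨆ i, ℋ i := by rw [hdec.submodule_iSup_eq_top]; trivial
    refine Submodule.iSup_induction ℋ (motive := fun y => f y = g y) hx
      (fun m y hy => hfg m y hy) (by simp) ?_
    intro y z hy hz
    simp [map_add, hy, hz]
  -- graded support of `Ψ`
  have hΨ0 : ∀ (m : ℕ) (x : H), x ∈ ℋ m → ∀ β : List ℕ, β.sum ≠ m → Ψ x β = 0 := by
    intro m x hx β hβ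
    exact (Finsupp.mem_supported' (R := k) (Ψ x)).mp (hΨgraded m x hx) β hβ
  -- the counit is the coefficient of the empty composition
  have hcounit : ∀ x : H, Coalgebra.counit (R := k) x = Ψ x [] := by
    intro x
    rw [← ABSaux_counitQ_apply (Ψ x)]
    exact (LinearMap.congr_fun hΨcounit x).symm
  -- the coefficient of a single-part composition
  have hlap1 : ∀ a : ℕ, (Finsupp.lapply [a] : QSymM k →ₗ[k] k) ∘ₗ Ψ
      = if a = 0 then 0 else ζ.toLinearMap ∘ₗ π a := by
    intro a
    apply hext
    intro m x hx
    have hζx : epsP k (Ψ x) = ζ x := LinearMap.congr_fun hΨzeta x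
    have heps : epsP k (Ψ x) = Ψ x [] + Ψ x [m] := ABSaux_epsP_supported (Ψ x) (hΨ0 m x hx)
    simp only [LinearMap.comp_apply, Finsupp.lapply_apply]
    by_cases ham : a = m
    · subst ham
      have h1 : Ψ x [a] = ζ x - Ψ x [] := by
        rw [← hζx, heps]; ring
      by_cases ha : a = 0
      · subst ha
        rw [hconn] at hx
        obtain ⟨c, rfl⟩ := hx
        rw [if_pos rfl, LinearMap.zero_apply, h1, ← hcounit]
        have hz : ζ ((Algebra.linearMap k H) c) = c := by
          simp [Algebra.linearMap_apply]
        have hc : Coalgebra.counit (R := k) ((Algebra.linearMap k H) c) = c := by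
          have := (Bialgebra.counitAlgHom k H).commutes c
          simpa [Algebra.linearMap_apply] using this
        rw [hz, hc, sub_self]
      · rw [if_neg ha]
        have hπx : π a x = x := by rw [hπ a a x hx, if_pos rfl]
        have hnil : Ψ x [] = 0 := hΨ0 a x hx [] (by simpa using Ne.symm ha)
        simp only [LinearMap.comp_apply, AlgHom.toLinearMap_apply, hπx]
        rw [h1, hnil, sub_zero]
    · have hz : Ψ x [a] = 0 := hΨ0 m x hx [a] (by simpa using ham)
      rw [hz]
      split
      · simp
      · have hπx : π a x = 0 := by rw [hπ a m x hx, if_neg ham]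
        simp [hπx]
  -- the coefficient of an arbitrary list, as a functional on `H`
  have key : ∀ β : List ℕ, (Finsupp.lapply β : QSymM k →ₗ[k] k) ∘ₗ Ψ
      = if 0 ∈ β then 0 else zetaA ζ π β := by
    intro β
    induction β with
    | nil =>
      rw [if_neg (List.not_mem_nil (a := 0))]
      ext x
      simp only [LinearMap.comp_apply, Finsupp.lapply_apply, zetaA]
      exact (hcounit x).symm
    | cons a t ih =>
      have step : (Finsupp.lapply (a :: t) : QSymM k →ₗ[k] k) ∘ₗ Ψ
          = LinearMap.mul' k k ∘ₗ
              TensorProduct.map ((Finsupp.lapply [a] : QSymM k →ₗ[k] k) ∘ₗ Ψ)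
                ((Finsupp.lapply t : QSymM k →ₗ[k] k) ∘ₗ Ψ) ∘ₗ
              Coalgebra.comul (R := k) := by
        rw [ABSaux_lapply_cons]
        ext x
        simp only [LinearMap.comp_apply]
        have hcx : comulQ k (Ψ x)
            = TensorProduct.map Ψ Ψ (Coalgebra.comul (R := k) x) :=
          LinearMap.congr_fun hΨcomul x
        rw [hcx,
          ← LinearMap.comp_apply (TensorProduct.map (Finsupp.lapply [a]) (Finsupp.lapply t)),
          ← TensorProduct.map_comp]
      rw [step]
      by_cases ha : a = 0
      · subst ha
        rw [hlap1 0, if_pos rfl, TensorProduct.map_zero_left,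
          if_pos (List.mem_cons_self (a := 0) (l := t))]
        simp
      · by_cases ht : (0 : ℕ) ∈ t
        · rw [ih, if_pos ht, TensorProduct.map_zero_right,
            if_pos (List.mem_cons_of_mem a ht)]
          simp
        · have hmem : ¬ (0 : ℕ) ∈ a :: t := by
            intro hc
            rcases List.mem_cons.mp hc with hc' | hc'
            · exact ha hc'.symm
            · exact ht hc'
          rw [hlap1 a, if_neg ha, ih, if_neg ht, if_neg hmem]
          rfl
  intro n h hh
  have hcoeff : ∀ β : List ℕ, Ψ h β
      = if IsComposition β ∧ β.sum = n then zetaA ζ π β h else 0 := by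
    intro β
    by_cases hs : β.sum = n
    · by_cases hz : (0 : ℕ) ∈ β
      · have h1 : Ψ h β = 0 := by
          have h2 := LinearMap.congr_fun (key β) h
          simpa [if_pos hz] using h2
        rw [h1, if_neg]
        rintro ⟨hcomp, -⟩
        exact absurd (hcomp 0 hz) (lt_irrefl 0)
      · have h1 : Ψ h β = zetaA ζ π β h := by
          have h2 := LinearMap.congr_fun (key β) h
          simpa [if_neg hz] using h2
        rw [h1, if_pos ⟨fun a ha => Nat.pos_of_ne_zero (fun h0 => hz (h0 ▸ ha)), hs⟩]
    · rw [hΨ0 n h hh β hs, if_neg (fun hc => hs hc.2)]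
  have hsingle : ∀ β ∈ {α : List ℕ | IsComposition α ∧ α.sum = n},
      zetaA ζ π β h • Mq k β = Finsupp.single β (Ψ h β) := by
    intro β hβ
    rw [hcoeff β, if_pos (show IsComposition β ∧ β.sum = n from hβ), Mq,
      Finsupp.smul_single, smul_eq_mul, mul_one]
  rw [finsum_mem_congr rfl hsingle]
  have hset : {α : List ℕ | IsComposition α ∧ α.sum = n}
      ∩ Function.support (fun β => Finsupp.single β (Ψ h β))
      = ↑(Ψ h).support ∩ Function.support (fun β => Finsupp.single β (Ψ h β)) := by
    ext β
    simp only [Set.mem_inter_iff, Function.mem_support, Set.mem_setOf_eq,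
      Finset.coe_sort_coe, Finset.mem_coe, Finsupp.mem_support_iff, ne_eq,
      Finsupp.single_eq_zero, and_self]
    constructor
    · rintro ⟨-, hne⟩; exact hne
    · intro hne
      refine ⟨?_, hne⟩
      by_contra hc
      exact hne (by rw [hcoeff β, if_neg hc])
  rw [finsum_mem_eq_sum_of_inter_support_eq _ hset]
  conv_lhs => rw [← Finsupp.sum_single (Ψ h)]
  rfl
end

section
/- Let H be a commutative connected graded k-Hopf algebra. For each composition α = (a₁,…,a_k) let ξ_α : H → H be the composite m^{(k−1)} ∘ π_α ∘ Δ^{(k−1)}, and define the Bernstein homomorphism β_H : H → H ⊗[k] QSym by β_H(h) = Σ_α ξ_α(h) ⊗ M_α (a finite sum for each h). Then (id_H ⊗ ε_P) ∘ β_H = id_H, where ε_P : QSym → k is f ↦ f(1,0,0,…) and H ⊗ k is identified with H. In particular, β_H is injective. -/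
open TensorProduct

open TensorProduct

/-! ### Auxiliary machinery for the proof -/

noncomputable def rCnt (k : Type*) (H : Type*) [CommRing k] [CommRing H] [HopfAlgebra k H] :
    H ⊗[k] H →ₗ[k] H :=
  (TensorProduct.rid k H).toLinearMap ∘ₗ LinearMap.lTensor H (Coalgebra.counit (R := k))

noncomputable def lCnt (k : Type*) (H : Type*) [CommRing k] [CommRing H] [HopfAlgebra k H] :
    H ⊗[k] H →ₗ[k] H :=
  (TensorProduct.lid k H).toLinearMap ∘ₗ LinearMap.rTensor H (Coalgebra.counit (R := k))

section Auxx
variable {k H : Type*} [CommRing k] [CommRing H] [HopfAlgebra k H]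

@[simp] lemma rCnt_tmul (x y : H) :
    rCnt k H (x ⊗ₜ[k] y) = Coalgebra.counit (R := k) y • x := by
  simp [rCnt]

lemma rCnt_comul (h : H) : rCnt k H (Coalgebra.comul (R := k) h) = h := by
  have := Coalgebra.lTensor_counit_comul (R := k) h
  simp only [rCnt, LinearMap.coe_comp, Function.comp_apply, LinearEquiv.coe_coe]
  rw [this]; simp

@[simp] lemma lCnt_tmul (x y : H) :
    lCnt k H (x ⊗ₜ[k] y) = Coalgebra.counit (R := k) x • y := by
  simp [lCnt]

lemma lCnt_comul (h : H) : lCnt k H (Coalgebra.comul (R := k) h) = h := by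
  have := Coalgebra.rTensor_counit_comul (R := k) h
  simp only [lCnt, LinearMap.coe_comp, Function.comp_apply, LinearEquiv.coe_coe]
  rw [this]; simp

/-- In a connected graded bialgebra, the counit vanishes in positive degrees. -/
lemma counit_eq_zero
    (ℋ : ℕ → Submodule k H) (π : ℕ → H →ₗ[k] H)
    (hπ : ∀ n m : ℕ, ∀ h ∈ ℋ m, π n h = if n = m then h else 0)
    (hgcomul : ∀ n : ℕ, ∀ h ∈ ℋ n, Coalgebra.comul (R := k) h ∈
      ⨆ (p : ℕ × ℕ) (_ : p.1 + p.2 = n),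
        LinearMap.range (TensorProduct.mapIncl (ℋ p.1) (ℋ p.2))) :
    ∀ n : ℕ, 0 < n → ∀ h ∈ ℋ n, Coalgebra.counit (R := k) h = 0 := by
  intro n
  induction n using Nat.strong_induction_on with
  | _ n IH =>
  intro hn h hh
  set ε : H →ₗ[k] k := Coalgebra.counit (R := k) with hεdef
  set A : H ⊗[k] H →ₗ[k] k := LinearMap.mul' k k ∘ₗ TensorProduct.map ε ε with hA
  set B : H ⊗[k] H →ₗ[k] k := LinearMap.mul' k k ∘ₗ TensorProduct.map (ε ∘ₗ π 0) ε with hB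
  set C : H ⊗[k] H →ₗ[k] k := LinearMap.mul' k k ∘ₗ TensorProduct.map ε (ε ∘ₗ π 0) with hC
  have hker : (⨆ (p : ℕ × ℕ) (_ : p.1 + p.2 = n),
      LinearMap.range (TensorProduct.mapIncl (ℋ p.1) (ℋ p.2))) ≤
      LinearMap.ker (A - B - C) := by
    refine iSup₂_le fun p hp => ?_
    rw [LinearMap.range_le_ker_iff]
    apply TensorProduct.ext'
    rintro ⟨x, hx⟩ ⟨y, hy⟩
    have hmain : (A - B - C) (x ⊗ₜ[k] y) =
        ε x * ε y - ε (π 0 x) * ε y - ε x * ε (π 0 y) := by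
      simp [hA, hB, hC, LinearMap.sub_apply]
    have hgoal : (A - B - C) (x ⊗ₜ[k] y) = 0 := by
      rw [hmain]
      rcases Nat.eq_zero_or_pos p.1 with h1 | h1
      · have hx0 : π 0 x = x := by rw [hπ 0 p.1 x hx, if_pos h1.symm]
        have hy0 : π 0 y = 0 := by
          rw [hπ 0 p.2 y hy, if_neg]
          omega
        rw [hx0, hy0]; simp
      · rcases Nat.eq_zero_or_pos p.2 with h2 | h2
        · have hy0 : π 0 y = y := by rw [hπ 0 p.2 y hy, if_pos h2.symm]
          have hx0 : π 0 x = 0 := by rw [hπ 0 p.1 x hx, if_neg]; omega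
          rw [hx0, hy0]; simp
        · have hlt : p.1 < n := by omega
          have hεx : ε x = 0 := IH p.1 hlt h1 x hx
          have hx0 : π 0 x = 0 := by rw [hπ 0 p.1 x hx, if_neg]; omega
          rw [hεx, hx0]; simp
    simpa using hgoal
  have hmem := hker (hgcomul n h hh)
  rw [LinearMap.mem_ker] at hmem
  have hAe : A = ε ∘ₗ rCnt k H := by
    apply TensorProduct.ext'
    intro x y
    simp [hA, mul_comm, hεdef]
  have hBe : B = (ε ∘ₗ π 0) ∘ₗ rCnt k H := by
    apply TensorProduct.ext'
    intro x y
    simp [hB, mul_comm, hεdef]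
  have hCe : C = (ε ∘ₗ π 0) ∘ₗ lCnt k H := by
    apply TensorProduct.ext'
    intro x y
    simp [hC, mul_comm, hεdef]
  have hπ0 : π 0 h = 0 := by rw [hπ 0 n h hh, if_neg]; omega
  rw [LinearMap.sub_apply, LinearMap.sub_apply, hAe, hBe, hCe] at hmem
  simp only [LinearMap.coe_comp, Function.comp_apply, rCnt_comul, lCnt_comul, hπ0,
    map_zero, sub_zero] at hmem
  exact hmem

lemma xiA_nil_apply (π : ℕ → H →ₗ[k] H) (h : H) :
    xiA π [] h = Algebra.linearMap k H (Coalgebra.counit (R := k) h) := rfl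

lemma xiA_cons_apply (π : ℕ → H →ₗ[k] H) (a : ℕ) (t : List ℕ) (h : H) :
    xiA π (a :: t) h =
      (LinearMap.mul' k H ∘ₗ TensorProduct.map (π a) (xiA π t))
        (Coalgebra.comul (R := k) h) := rfl

/-- `ξ_{(n)} = π_n`. -/
lemma xiA_single_apply (π : ℕ → H →ₗ[k] H) (n : ℕ) (h : H) :
    xiA π [n] h = π n h := by
  have key : LinearMap.mul' k H ∘ₗ TensorProduct.map (π n) (xiA π []) =
      π n ∘ₗ rCnt k H := by
    apply TensorProduct.ext'
    intro x y
    simp only [LinearMap.coe_comp, Function.comp_apply]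
    rw [TensorProduct.map_tmul, LinearMap.mul'_apply, rCnt_tmul, map_smul,
      xiA_nil_apply, Algebra.linearMap_apply, Algebra.smul_def, mul_comm]
  rw [xiA_cons_apply, key]
  simp [rCnt_comul]

/-- `ξ_α` vanishes on `ℋ n` when `|α| ≠ n`. -/
lemma xiA_apply_eq_zero
    (ℋ : ℕ → Submodule k H) (π : ℕ → H →ₗ[k] H)
    (hπ : ∀ n m : ℕ, ∀ h ∈ ℋ m, π n h = if n = m then h else 0)
    (hgcomul : ∀ n : ℕ, ∀ h ∈ ℋ n, Coalgebra.comul (R := k) h ∈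
      ⨆ (p : ℕ × ℕ) (_ : p.1 + p.2 = n),
        LinearMap.range (TensorProduct.mapIncl (ℋ p.1) (ℋ p.2))) :
    ∀ (α : List ℕ) (n : ℕ), α.sum ≠ n → ∀ h ∈ ℋ n, xiA π α h = 0 := by
  intro α
  induction α with
  | nil =>
    intro n hne h hh
    have hn : 0 < n := Nat.pos_of_ne_zero fun h0 => hne (by simp [h0])
    rw [xiA_nil_apply, counit_eq_zero ℋ π hπ hgcomul n hn h hh, map_zero]
  | cons a t IH =>
    intro n hne h hh
    set D : H ⊗[k] H →ₗ[k] H :=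
      LinearMap.mul' k H ∘ₗ TensorProduct.map (π a) (xiA π t) with hD
    have hker : (⨆ (p : ℕ × ℕ) (_ : p.1 + p.2 = n),
        LinearMap.range (TensorProduct.mapIncl (ℋ p.1) (ℋ p.2))) ≤ LinearMap.ker D := by
      refine iSup₂_le fun p hp => ?_
      rw [LinearMap.range_le_ker_iff]
      apply TensorProduct.ext'
      rintro ⟨x, hx⟩ ⟨y, hy⟩
      by_cases hpa : p.1 = a
      · have hts : t.sum ≠ p.2 := by
          intro hts
          apply hne
          rw [List.sum_cons, hts]
          omega
        have hy0 : xiA π t y = 0 := IH p.2 hts y hy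
        simp [hD, hy0]
      · have hx0 : π a x = 0 := by
          rw [hπ a p.1 x hx, if_neg (fun hh' => hpa hh'.symm)]
        simp [hD, hx0]
    have hmem := hker (hgcomul n h hh)
    rw [LinearMap.mem_ker] at hmem
    rw [xiA_cons_apply]
    exact hmem

/-- A list of positive naturals has length at most its sum. -/
lemma length_le_sum_of_comp : ∀ {α : List ℕ}, IsComposition α → α.length ≤ α.sum := by
  intro α
  induction α with
  | nil => intro _; simp
  | cons a t IH =>
    intro hc
    have ha : 0 < a := hc a List.mem_cons_self
    have ht : IsComposition t := fun b hb => hc b (List.mem_cons_of_mem a hb)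
    simp only [List.length_cons, List.sum_cons]
    have := IH ht
    omega

/-- Lists with bounded length and bounded entries form a finite set. -/
lemma finite_bounded_lists (N : ℕ) :
    {l : List ℕ | l.length ≤ N ∧ ∀ a ∈ l, a ≤ N}.Finite := by
  have hfin : {l : List (Fin (N + 1)) | l.length ≤ N}.Finite :=
    List.finite_length_le (Fin (N + 1)) N
  apply (hfin.image (fun l => l.map Fin.val)).subset
  rintro l ⟨hlen, hmem⟩
  refine ⟨l.pmap (fun a ha => (⟨a, ha⟩ : Fin (N + 1))) (fun a ha => Nat.lt_succ_of_le (hmem a ha)),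
    ?_, ?_⟩
  · simpa using hlen
  · simp [List.map_pmap, List.pmap_eq_map]

end Auxx

/-- Let `H` be a commutative connected graded `k`-Hopf algebra (grading `ℋ`, graded projections
`π`), and let `β_H : H → H ⊗[k] QSym`, `β_H(h) = ∑_α ξ_α(h) ⊗ M_α` (sum over compositions `α`),
be the Bernstein homomorphism, where `ξ_α = m^{(m-1)} ∘ π_α ∘ Δ^{(m-1)}`.  Then
`(id_H ⊗ ε_P) ∘ β_H = id_H`; in particular `β_H` is injective. -/
theorem bernstein_counit_section {k H : Type*} [CommRing k] [CommRing H] [HopfAlgebra k H]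
    (ℋ : ℕ → Submodule k H) (π : ℕ → H →ₗ[k] H)
    (hdec : DirectSum.IsInternal ℋ)
    (hconn : ℋ 0 = LinearMap.range (Algebra.linearMap k H))
    (hπ : ∀ n m : ℕ, ∀ h ∈ ℋ m, π n h = if n = m then h else 0)
    (hgmul : ∀ i j : ℕ, ℋ i * ℋ j ≤ ℋ (i + j))
    (hgcomul : ∀ n : ℕ, ∀ h ∈ ℋ n, Coalgebra.comul (R := k) h ∈
      ⨆ (p : ℕ × ℕ) (_ : p.1 + p.2 = n),
        LinearMap.range (TensorProduct.mapIncl (ℋ p.1) (ℋ p.2))) :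
    (∀ h : H,
      ∑ᶠ α ∈ {α : List ℕ | IsComposition α}, epsP k (Mq k α) • xiA π α h = h) ∧
    Function.Injective (fun h : H =>
      ∑ᶠ α ∈ {α : List ℕ | IsComposition α}, xiA π α h ⊗ₜ[k] Mq k α) := by
  classical
  letI : Zero (H ⊗[k] QSymM k) := (inferInstance : AddZeroClass (H ⊗[k] QSymM k)).toZero
  set S : Set (List ℕ) := {α : List ℕ | IsComposition α} with hS
  have hcz := counit_eq_zero ℋ π hπ hgcomul
  have hxz := xiA_apply_eq_zero ℋ π hπ hgcomul
  have hdecomp : ∀ h : H, ∃ f : ℕ →₀ H, (∀ i, f i ∈ ℋ i) ∧ (f.sum fun _ x => x) = h := by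
    intro h
    exact (Submodule.mem_iSup_iff_exists_finsupp ℋ h).1
      (by rw [hdec.submodule_iSup_eq_top]; trivial)
  have hepsP : ∀ α : List ℕ, epsP k (Mq k α) = if α.length ≤ 1 then 1 else 0 := by
    intro α
    by_cases hl : α.length ≤ 1 <;>
      simp [epsP, Mq, Finsupp.lsum_single, hl]
  have hunitcnt : ∀ x ∈ ℋ 0, Algebra.linearMap k H (Coalgebra.counit (R := k) x) = x := by
    intro x hx
    rw [hconn] at hx
    obtain ⟨c, rfl⟩ := hx
    simp
  -- Part 1
  have part1 : ∀ h : H, ∑ᶠ α ∈ S, epsP k (Mq k α) • xiA π α h = h := by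
    intro h
    obtain ⟨f, hf, hsum⟩ := hdecomp h
    have hπh : ∀ m, π m h = f m := by
      intro m
      rw [← hsum, Finsupp.sum, map_sum,
        Finset.sum_congr rfl fun n _ => hπ m n (f n) (hf n), Finset.sum_ite_eq]
      by_cases hm : m ∈ f.support
      · rw [if_pos hm]
      · rw [if_neg hm]; exact (Finsupp.notMem_support_iff.1 hm).symm
    have hcnth : Coalgebra.counit (R := k) h = Coalgebra.counit (R := k) (f 0) := by
      conv_lhs => rw [← hsum]
      rw [Finsupp.sum, map_sum]
      have hterm : ∀ n ∈ f.support, Coalgebra.counit (R := k) (f n) =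
          if n = 0 then Coalgebra.counit (R := k) (f 0) else 0 := by
        intro n _
        by_cases hn0 : n = 0
        · subst hn0; simp
        · rw [if_neg hn0]
          exact hcz n (Nat.pos_of_ne_zero hn0) (f n) (hf n)
      rw [Finset.sum_congr rfl hterm, Finset.sum_ite_eq']
      by_cases h0 : 0 ∈ f.support
      · rw [if_pos h0]
      · rw [if_neg h0, Finsupp.notMem_support_iff.1 h0, map_zero]
    set T : Finset (List ℕ) :=
      insert [] ((f.support.filter fun n => 0 < n).image fun n => [n]) with hT
    have hsub : ↑T ⊆ S := by
      intro α hα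
      simp only [hT, Finset.coe_insert, Set.mem_insert_iff, Finset.coe_image,
        Set.mem_image, Finset.mem_coe, Finset.mem_filter] at hα
      rcases hα with rfl | ⟨n, ⟨_, hn⟩, rfl⟩
      · intro a ha; simp at ha
      · intro a ha; simp only [List.mem_singleton] at ha; omega
    have hsupp : S ∩ Function.support (fun α => epsP k (Mq k α) • xiA π α h) ⊆ ↑T := by
      rintro α ⟨hαS, hαF⟩
      have hαF' : epsP k (Mq k α) • xiA π α h ≠ 0 := hαF
      rcases α with _ | ⟨a, _ | ⟨b, t⟩⟩
      · exact Finset.mem_coe.2 (Finset.mem_insert_self _ _)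
      · have ha : 0 < a := hαS a (by simp)
        have hval : epsP k (Mq k [a]) • xiA π [a] h = f a := by
          have he : epsP k (Mq k [a]) = 1 := by rw [hepsP]; simp
          rw [he, one_smul, xiA_single_apply, hπh]
        have hfa : a ∈ f.support := by
          rw [Finsupp.mem_support_iff]
          intro h0
          exact hαF' (by rw [hval, h0])
        apply Finset.mem_coe.2
        apply Finset.mem_insert_of_mem
        exact Finset.mem_image.2 ⟨a, Finset.mem_filter.2 ⟨hfa, ha⟩, rfl⟩
      · exfalso
        apply hαF'
        have he : epsP k (Mq k (a :: b :: t)) = 0 := by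
          rw [hepsP]
          simp
        rw [he, zero_smul]
    rw [finsum_mem_eq_sum_of_subset _ hsupp hsub, hT]
    have hnil : ([] : List ℕ) ∉ (f.support.filter fun n => 0 < n).image fun n => [n] := by
      simp
    rw [Finset.sum_insert hnil]
    have hhead : epsP k (Mq k []) • xiA π [] h = f 0 := by
      have he : epsP k (Mq k []) = 1 := by rw [hepsP]; simp
      rw [he, one_smul, xiA_nil_apply, hcnth]
      exact hunitcnt (f 0) (hf 0)
    rw [hhead]
    rw [Finset.sum_image (fun a _ b _ hab => by simpa using hab)]
    have hterm2 : ∀ n ∈ f.support.filter fun n => 0 < n,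
        epsP k (Mq k [n]) • xiA π [n] h = f n := by
      intro n _
      have he : epsP k (Mq k [n]) = 1 := by rw [hepsP]; simp
      rw [he, one_smul, xiA_single_apply, hπh]
    rw [Finset.sum_congr rfl hterm2]
    conv_rhs => rw [← hsum]
    rw [Finsupp.sum,
      ← Finset.sum_filter_add_sum_filter_not f.support (fun n => 0 < n) (fun n => f n)]
    have h3 : (∑ n ∈ f.support.filter fun n => ¬0 < n, f n) = f 0 := by
      have hfe : (f.support.filter fun n => ¬0 < n) = f.support.filter fun n => n = 0 := by
        apply Finset.filter_congr
        intro n _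
        simp only [Nat.not_lt, Nat.le_zero, eq_iff_iff]
      rw [hfe, Finset.sum_filter, Finset.sum_ite_eq']
      by_cases h0 : 0 ∈ f.support
      · rw [if_pos h0]
      · rw [if_neg h0, Finsupp.notMem_support_iff.1 h0]
    rw [h3, add_comm]
  refine ⟨part1, ?_⟩
  -- Part 2
  have hGall : ∀ h : H,
      ((TensorProduct.rid k H).toLinearMap ∘ₗ LinearMap.lTensor H (epsP k))
        (∑ᶠ α ∈ S, xiA π α h ⊗ₜ[k] Mq k α) = h := by
    intro h
    obtain ⟨f, hf, hsum⟩ := hdecomp h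
    have hNs : ∀ n ∈ f.support, n ≤ f.support.sup id := fun n hn => Finset.le_sup (f := id) hn
    have hsupfin : (S ∩ Function.support fun α => xiA π α h).Finite := by
      apply (finite_bounded_lists (f.support.sup id)).subset
      rintro α ⟨hαS, hα⟩
      have hxhne : xiA π α h ≠ 0 := hα
      have hsum' : α.sum ∈ f.support := by
        by_contra hns
        apply hxhne
        rw [← hsum, Finsupp.sum, map_sum]
        apply Finset.sum_eq_zero
        intro n hn
        exact hxz α n (fun he => hns (he ▸ hn)) (f n) (hf n)
      have hsle : α.sum ≤ f.support.sup id := hNs _ hsum'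
      exact ⟨le_trans (length_le_sum_of_comp hαS) hsle,
        fun a ha => le_trans (List.le_sum_of_mem ha) hsle⟩
    have hgfin : (S ∩ Function.support fun α : List ℕ => (xiA π α h ⊗ₜ[k] Mq k α : H ⊗[k] QSymM k)).Finite := by
      apply hsupfin.subset
      rintro α ⟨h1, h2⟩
      refine ⟨h1, fun h0 => ?_⟩
      apply h2
      show xiA π α h ⊗ₜ[k] Mq k α = 0
      rw [show xiA π α h = 0 from h0, TensorProduct.zero_tmul]
    rw [finsum_mem_eq_sum _ hgfin, map_sum]
    have hGterm : ∀ α ∈ hgfin.toFinset,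
        ((TensorProduct.rid k H).toLinearMap ∘ₗ LinearMap.lTensor H (epsP k))
          (xiA π α h ⊗ₜ[k] Mq k α) = epsP k (Mq k α) • xiA π α h := by
      intro α _
      simp
    rw [Finset.sum_congr rfl hGterm]
    have hsupp2 : S ∩ Function.support (fun α => epsP k (Mq k α) • xiA π α h) ⊆
        ↑hgfin.toFinset := by
      rintro α ⟨h1, h2⟩
      rw [Set.Finite.coe_toFinset]
      refine ⟨h1, fun h0 => ?_⟩
      have hx : xiA π α h ≠ 0 := by
        intro hz
        apply h2
        show epsP k (Mq k α) • xiA π α h = 0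
        rw [hz, smul_zero]
      apply hx
      have h0' : xiA π α h ⊗ₜ[k] Mq k α = 0 := h0
      have := congrArg (fun t => (TensorProduct.finsuppScalarRight k k H (List ℕ)) t α) h0'
      simpa [Mq, TensorProduct.finsuppScalarRight_apply_tmul_apply] using this
    rw [← finsum_mem_eq_sum_of_subset _ hsupp2 (by
      rw [Set.Finite.coe_toFinset]; exact Set.inter_subset_left)]
    exact part1 h
  intro h1 h2 heq
  have e := congrArg ((TensorProduct.rid k H).toLinearMap ∘ₗ LinearMap.lTensor H (epsP k)) heq
  simp only at e
  rwa [hGall h1, hGall h2] at e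
end
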